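/- arXiv:math/0702395 — 4 statements merged into one kernel-verified Lean document; each statement's English description precedes it below -/
import Mathlib

section
/- Define the reduced rank χ₀(H) = max(0, rank(H) − 1) for a finitely generated free group H. If U and V are finitely generated subgroups of a free group F with U of finite index n in F, then for any subgroup V, χ₀(U ∩ V) ≤ n · χ₀(V). -/
open scoped Classical

namespace SchreierSharp

open Subgroup QuotientGroup

variable {G : Type*} [Group G] (H : Subgroup G) (S : Finset G)
  (hS : Subgroup.closure (S : Set G) = ⊤)

include hS

private lemma exists_word (q : Quotient (QuotientGroup.rightRel H)) :
    ∃ n : ℕ, ∃ l : List G, (∀ x ∈ l, x ∈ S ∨ x⁻¹ ∈ S) ∧ l.length = n ∧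
      Quotient.mk'' l.prod = q := by
  induction q using Quotient.inductionOn' with
  | h g =>
    have hg : g ∈ Subgroup.closure (S : Set G) := hS.symm ▸ Subgroup.mem_top g
    have hg' : g ∈ Submonoid.closure ((S : Set G) ∪ (S : Set G)⁻¹) := by
      rwa [← Subgroup.mem_toSubmonoid, Subgroup.closure_toSubmonoid] at hg
    obtain ⟨l, hl, hprod⟩ := Submonoid.exists_list_of_mem_closure hg'
    refine ⟨l.length, l, fun x hx => ?_, rfl, by rw [hprod]⟩
    rcases hl x hx with h | h
    · exact Or.inl h
    · exact Or.inr (Set.mem_inv.mp h)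

noncomputable def len (q : Quotient (QuotientGroup.rightRel H)) : ℕ :=
  Nat.find (exists_word H S hS q)

noncomputable def word (q : Quotient (QuotientGroup.rightRel H)) : List G :=
  (Nat.find_spec (exists_word H S hS q)).choose

lemma word_mem {q : Quotient (QuotientGroup.rightRel H)} :
    ∀ x ∈ word H S hS q, x ∈ S ∨ x⁻¹ ∈ S :=
  (Nat.find_spec (exists_word H S hS q)).choose_spec.1

lemma word_length (q : Quotient (QuotientGroup.rightRel H)) :
    (word H S hS q).length = len H S hS q :=
  (Nat.find_spec (exists_word H S hS q)).choose_spec.2.1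

lemma word_mk (q : Quotient (QuotientGroup.rightRel H)) :
    Quotient.mk'' (word H S hS q).prod = q :=
  (Nat.find_spec (exists_word H S hS q)).choose_spec.2.2

noncomputable def par (q : Quotient (QuotientGroup.rightRel H)) :
    Quotient (QuotientGroup.rightRel H) :=
  Quotient.mk'' (word H S hS q).dropLast.prod

noncomputable def stp (q : Quotient (QuotientGroup.rightRel H)) : G :=
  (word H S hS q).dropLast.prod⁻¹ * (word H S hS q).prod

lemma len_le {q : Quotient (QuotientGroup.rightRel H)} {l : List G}
    (hl : ∀ x ∈ l, x ∈ S ∨ x⁻¹ ∈ S) (hq : Quotient.mk'' l.prod = q) :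
    len H S hS q ≤ l.length :=
  Nat.find_le ⟨l, hl, rfl, hq⟩

lemma par_lt {q : Quotient (QuotientGroup.rightRel H)} (h : len H S hS q ≠ 0) :
    len H S hS (par H S hS q) < len H S hS q := by
  have h1 : len H S hS (par H S hS q) ≤ (word H S hS q).dropLast.length :=
    len_le H S hS (fun x hx => word_mem H S hS x ((word H S hS q).dropLast_sublist.subset hx))
      rfl
  rw [List.length_dropLast, word_length] at h1
  omega

lemma word_ne_nil {q : Quotient (QuotientGroup.rightRel H)} (h : len H S hS q ≠ 0) :
    word H S hS q ≠ [] := by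
  intro hnil
  apply h
  rw [← word_length, hnil]
  rfl

lemma stp_mem {q : Quotient (QuotientGroup.rightRel H)} (h : len H S hS q ≠ 0) :
    stp H S hS q ∈ word H S hS q := by
  have hne := word_ne_nil H S hS h
  have hd := List.dropLast_append_getLast hne
  have hstp : stp H S hS q = (word H S hS q).getLast hne := by
    unfold stp
    conv_lhs => rw [← hd]
    rw [List.dropLast_concat, List.prod_append, List.prod_singleton]
    group
  rw [hstp]
  exact List.getLast_mem hne

lemma stp_prod (q : Quotient (QuotientGroup.rightRel H)) :
    (word H S hS q).dropLast.prod * stp H S hS q = (word H S hS q).prod := by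
  unfold stp; group

noncomputable def sig : ℕ → Quotient (QuotientGroup.rightRel H) → G
  | 0, _ => 1
  | n + 1, q =>
    if len H S hS q = 0 then 1 else sig n (par H S hS q) * stp H S hS q

noncomputable def sigma (q : Quotient (QuotientGroup.rightRel H)) : G :=
  sig H S hS (len H S hS q + 1) q

lemma sig_eq (n : ℕ) : ∀ q, len H S hS q < n → sig H S hS n q = sigma H S hS q := by
  induction n using Nat.strong_induction_on with
  | _ n ih =>
    match n with
    | 0 => exact fun q h => absurd h (by omega)
    | k + 1 =>
      intro q h
      by_cases h0 : len H S hS q = 0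
      · simp [sig, sigma, h0]
      · have hpar := par_lt H S hS h0
        have e1 : sig H S hS (k + 1) q
            = sig H S hS k (par H S hS q) * stp H S hS q := by
          simp [sig, h0]
        have e2 : sigma H S hS q
            = sig H S hS (len H S hS q) (par H S hS q) * stp H S hS q := by
          unfold sigma
          simp [sig, h0]
        rw [e1, e2, ih k (by omega) _ (by omega),
          ih (len H S hS q) (by omega) _ hpar]

lemma sigma_eq_one {q : Quotient (QuotientGroup.rightRel H)} (h0 : len H S hS q = 0) :
    sigma H S hS q = 1 := by
  simp [sigma, sig, h0]

lemma sigma_step {q : Quotient (QuotientGroup.rightRel H)} (h0 : len H S hS q ≠ 0) :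
    sigma H S hS q = sigma H S hS (par H S hS q) * stp H S hS q := by
  have e2 : sigma H S hS q
      = sig H S hS (len H S hS q) (par H S hS q) * stp H S hS q := by
    unfold sigma
    simp [sig, h0]
  rw [e2, sig_eq H S hS (len H S hS q) _ (par_lt H S hS h0)]

lemma mk_sigma : ∀ q, Quotient.mk'' (sigma H S hS q) = q := by
  suffices h : ∀ n q, len H S hS q = n → Quotient.mk'' (sigma H S hS q) = q from
    fun q => h _ q rfl
  intro n
  induction n using Nat.strong_induction_on with
  | _ n ih =>
    intro q hq
    by_cases h0 : len H S hS q = 0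
    · rw [sigma_eq_one H S hS h0]
      have hw := word_mk H S hS q
      have hnil : word H S hS q = [] :=
        List.length_eq_zero_iff.mp (by rw [word_length]; exact h0)
      rwa [hnil, List.prod_nil] at hw
    · rw [sigma_step H S hS h0]
      have hpar : Quotient.mk'' (sigma H S hS (par H S hS q)) = par H S hS q :=
        ih _ (hq ▸ par_lt H S hS h0) _ rfl
      have h1 : (word H S hS q).dropLast.prod * (sigma H S hS (par H S hS q))⁻¹ ∈ H :=
        QuotientGroup.rightRel_apply.mp (Quotient.exact' hpar)
      conv_rhs => rw [← word_mk H S hS q]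
      apply Quotient.sound'
      refine QuotientGroup.rightRel_apply.mpr ?_
      have heq : (word H S hS q).prod * (sigma H S hS (par H S hS q) * stp H S hS q)⁻¹
          = (word H S hS q).dropLast.prod * (sigma H S hS (par H S hS q))⁻¹ := by
        unfold stp; group
      rw [heq]
      exact h1

lemma sigma_inj : Function.Injective (sigma H S hS) := fun a b hab => by
  rw [← mk_sigma H S hS a, ← mk_sigma H S hS b, hab]

lemma len_one : len H S hS (Quotient.mk'' (1 : G)) = 0 :=
  Nat.le_zero.mp (len_le H S hS (l := []) (by simp) (by simp))

lemma sigma_one : sigma H S hS (Quotient.mk'' (1 : G)) = 1 :=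
  sigma_eq_one H S hS (len_one H S hS)

lemma eq_root_of_len_zero {q : Quotient (QuotientGroup.rightRel H)}
    (h0 : len H S hS q = 0) : q = Quotient.mk'' (1 : G) := by
  have hw := word_mk H S hS q
  have hnil : word H S hS q = [] :=
    List.length_eq_zero_iff.mp (by rw [word_length]; exact h0)
  rw [hnil, List.prod_nil] at hw
  exact hw.symm

end SchreierSharp

open scoped Pointwise in
open Subgroup QuotientGroup SchreierSharp in
/-- Sharpened Schreier bound: a finite-index subgroup `H` of a group generated by `S`
is generated by at most `H.index * S.card - (H.index - 1)` elements. -/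
theorem schreier_sharp {G : Type*} [Group G] (H : Subgroup G) [H.FiniteIndex]
    {S : Finset G} (hS : Subgroup.closure (S : Set G) = ⊤) :
    ∃ T : Finset H, T.card + H.index ≤ H.index * S.card + 1 ∧
      Subgroup.closure (T : Set H) = ⊤ := by
  classical
  letI := H.fintypeQuotientOfFiniteIndex
  letI : Fintype (Quotient (QuotientGroup.rightRel H)) :=
    Fintype.ofEquiv _ (QuotientGroup.quotientRightRelEquivQuotientLeftRel H).symm
  have hcardQ : Fintype.card (Quotient (QuotientGroup.rightRel H)) = H.index := by
    rw [Fintype.card_congr (QuotientGroup.quotientRightRelEquivQuotientLeftRel H),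
      Subgroup.index_eq_card, Nat.card_eq_fintype_card]
  set σ := sigma H S hS with hσdef
  have hmk : ∀ q, Quotient.mk'' (σ q) = q := mk_sigma H S hS
  set Rf : Finset G := Finset.univ.image σ with hRfdef
  have hRcoe : (Rf : Set G) = Set.range σ := by
    rw [hRfdef, Finset.coe_image, Finset.coe_univ, Set.image_univ]
  have hR : Subgroup.IsComplement (H : Set G) (Rf : Set G) := by
    rw [hRcoe]; exact Subgroup.isComplement_range_right hmk
  have hR1 : (1 : G) ∈ Rf :=
    hRfdef ▸ Finset.mem_image.mpr ⟨_, Finset.mem_univ _, sigma_one H S hS⟩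
  have htop := Subgroup.closure_mul_image_eq_top' (H := H) hR hR1 hS
  have hto : ∀ g : G,
      (Subgroup.IsComplement.toRightFun hR g : G) = σ (Quotient.mk'' g) := by
    intro g
    have hmem : ((Subgroup.IsComplement.toRightFun hR g : G)) ∈ Finset.image σ Finset.univ :=
      Finset.mem_coe.mp (Subgroup.IsComplement.toRightFun hR g).2
    obtain ⟨q', -, hq'⟩ := Finset.mem_image.mp hmem
    have h1 : Quotient.mk'' ((Subgroup.IsComplement.toRightFun hR g : G))
        = Quotient.mk'' g :=
      Subgroup.IsComplement.mk''_rightQuotientEquiv hR (Quotient.mk'' g)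
    rw [← hq', hmk q'] at h1
    exact hq'.symm.trans (congrArg σ h1)
  have hgen1 : ∀ q, σ q * (Subgroup.IsComplement.toRightFun hR (σ q) : G)⁻¹ = 1 := by
    intro q
    rw [hto, hmk, mul_inv_cancel]
  set root : Quotient (QuotientGroup.rightRel H) := Quotient.mk'' (1 : G) with hrootdef
  have hlen_ne : ∀ q : Quotient (QuotientGroup.rightRel H), q ≠ root →
      len H S hS q ≠ 0 :=
    fun q hq h0 => hq (eq_root_of_len_zero H S hS h0)
  set pp : Quotient (QuotientGroup.rightRel H) → G × G := fun q =>
    if stp H S hS q ∈ S then (σ (par H S hS q), stp H S hS q)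
    else (σ q, (stp H S hS q)⁻¹) with hppdef
  have key : ∀ q, q ≠ root → ((pp q).1 ∈ Rf ∧ (pp q).2 ∈ S) ∧
      ((pp q).1 * (pp q).2) * (Subgroup.IsComplement.toRightFun hR
        ((pp q).1 * (pp q).2) : G)⁻¹ = 1 ∧
      (((pp q).1 = σ (par H S hS q) ∧ (pp q).1 * (pp q).2 = σ q) ∨
        ((pp q).1 = σ q ∧ (pp q).1 * (pp q).2 = σ (par H S hS q))) := by
    intro q hq
    have h0 := hlen_ne q hq
    have hstep : σ q = σ (par H S hS q) * stp H S hS q := sigma_step H S hS h0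
    by_cases hs : stp H S hS q ∈ S
    · have hpp1 : (pp q).1 = σ (par H S hS q) := by rw [hppdef]; simp [hs]
      have hpp2 : (pp q).2 = stp H S hS q := by rw [hppdef]; simp [hs]
      have hpps : (pp q).1 * (pp q).2 = σ q := by rw [hpp1, hpp2, ← hstep]
      refine ⟨⟨?_, ?_⟩, ?_, Or.inl ⟨hpp1, hpps⟩⟩
      · rw [hpp1, hRfdef]; exact Finset.mem_image.mpr ⟨_, Finset.mem_univ _, rfl⟩
      · rw [hpp2]; exact hs
      · rw [hpps]; exact hgen1 q
    · have hs' : (stp H S hS q)⁻¹ ∈ S :=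
        (word_mem H S hS _ (stp_mem H S hS h0)).resolve_left hs
      have hmul : σ q * (stp H S hS q)⁻¹ = σ (par H S hS q) := by
        rw [hstep]; group
      have hpp1 : (pp q).1 = σ q := by rw [hppdef]; simp [hs]
      have hpp2 : (pp q).2 = (stp H S hS q)⁻¹ := by rw [hppdef]; simp [hs]
      have hpps : (pp q).1 * (pp q).2 = σ (par H S hS q) := by rw [hpp1, hpp2, hmul]
      refine ⟨⟨?_, ?_⟩, ?_, Or.inr ⟨hpp1, hpps⟩⟩
      · rw [hpp1, hRfdef]; exact Finset.mem_image.mpr ⟨_, Finset.mem_univ _, rfl⟩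
      · rw [hpp2]; exact hs'
      · rw [hpps]; exact hgen1 _
  have hpp_inj : Set.InjOn pp ↑(Finset.univ.erase root) := by
    intro q₁ h₁ q₂ h₂ hppe
    have hq₁ : q₁ ≠ root := (Finset.mem_erase.mp (Finset.mem_coe.mp h₁)).1
    have hq₂ : q₂ ≠ root := (Finset.mem_erase.mp (Finset.mem_coe.mp h₂)).1
    obtain ⟨-, -, hcase₁⟩ := key q₁ hq₁
    obtain ⟨-, -, hcase₂⟩ := key q₂ hq₂
    have e1 : (pp q₁).1 = (pp q₂).1 := by rw [hppe]
    have e2 : (pp q₁).1 * (pp q₁).2 = (pp q₂).1 * (pp q₂).2 := by rw [hppe]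
    have hσinj : Function.Injective σ := sigma_inj H S hS
    rcases hcase₁ with ⟨a₁, b₁⟩ | ⟨a₁, b₁⟩ <;> rcases hcase₂ with ⟨a₂, b₂⟩ | ⟨a₂, b₂⟩
    · exact hσinj (by rw [← b₁, e2, b₂])
    · have h12 : par H S hS q₁ = q₂ := hσinj (by rw [← a₁, e1, a₂])
      have h21 : q₁ = par H S hS q₂ := hσinj (by rw [← b₁, e2, b₂])
      have l1 := par_lt H S hS (hlen_ne q₁ hq₁)
      have l2 := par_lt H S hS (hlen_ne q₂ hq₂)
      rw [h12] at l1
      rw [← h21] at l2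
      omega
    · have h12 : q₁ = par H S hS q₂ := hσinj (by rw [← a₁, e1, a₂])
      have h21 : par H S hS q₁ = q₂ := hσinj (by rw [← b₁, e2, b₂])
      have l1 := par_lt H S hS (hlen_ne q₁ hq₁)
      have l2 := par_lt H S hS (hlen_ne q₂ hq₂)
      rw [h21] at l1
      rw [← h12] at l2
      omega
    · exact hσinj (by rw [← a₁, e1, a₂])
  set D : Finset (G × G) := (Finset.univ.erase root).image pp with hDdef
  have hDsub : D ⊆ Rf ×ˢ S := by
    intro p hp
    obtain ⟨q, hq, rfl⟩ := Finset.mem_image.mp (hDdef ▸ hp)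
    have hq' : q ≠ root := (Finset.mem_erase.mp hq).1
    exact Finset.mem_product.mpr (key q hq').1
  have hDcard : D.card = H.index - 1 := by
    rw [hDdef, Finset.card_image_of_injOn hpp_inj,
      Finset.card_erase_of_mem (Finset.mem_univ _), Finset.card_univ, hcardQ]
  have hRcard : Rf.card = H.index := by
    rw [hRfdef, Finset.card_image_of_injective _ (sigma_inj H S hS : Function.Injective σ),
      Finset.card_univ, hcardQ]
  set gen2 : G × G → H := fun p =>
    ⟨(p.1 * p.2) * (Subgroup.IsComplement.toRightFun hR (p.1 * p.2) : G)⁻¹,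
      Subgroup.IsComplement.mul_inv_toRightFun_mem hR (p.1 * p.2)⟩ with hgen2def
  set T2 : Finset H := ((Rf ×ˢ S) \ D).image gen2 with hT2def
  have htop2 : Subgroup.closure (T2 : Set H) = ⊤ := by
    have hsub : (((Rf * S).image fun g =>
        (⟨g * (Subgroup.IsComplement.toRightFun hR g : G)⁻¹,
          Subgroup.IsComplement.mul_inv_toRightFun_mem hR g⟩ : H)) : Set H)
        ⊆ insert (1 : H) (T2 : Set H) := by
      intro x hx
      rw [Finset.mem_coe, Finset.mem_image] at hx
      obtain ⟨g, hg, rfl⟩ := hx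
      rw [Finset.mem_mul] at hg
      obtain ⟨r, hr, s, hs, rfl⟩ := hg
      by_cases hd : (r, s) ∈ D
      · left
        obtain ⟨q, hq, hpq⟩ := Finset.mem_image.mp (hDdef ▸ hd)
        have hq' : q ≠ root := (Finset.mem_erase.mp hq).1
        have h1 := (key q hq').2.1
        apply Subtype.ext
        show r * s * (Subgroup.IsComplement.toRightFun hR (r * s) : G)⁻¹ = 1
        have hr1 : (pp q).1 = r := by rw [hpq]
        have hs1 : (pp q).2 = s := by rw [hpq]
        rwa [hr1, hs1] at h1
      · right
        rw [Finset.mem_coe, hT2def, Finset.mem_image]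
        exact ⟨(r, s), Finset.mem_sdiff.mpr ⟨Finset.mem_product.mpr ⟨hr, hs⟩, hd⟩, rfl⟩
    refine le_antisymm le_top ?_
    calc (⊤ : Subgroup H) = _ := htop.symm
      _ ≤ Subgroup.closure (insert (1 : H) (T2 : Set H)) := Subgroup.closure_mono hsub
      _ = Subgroup.closure (T2 : Set H) := by
          rw [← Set.union_singleton, Subgroup.closure_union,
            Subgroup.closure_singleton_one, sup_bot_eq]
  refine ⟨T2, ?_, htop2⟩
  have h1 : T2.card ≤ ((Rf ×ˢ S) \ D).card := Finset.card_image_le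
  have h2 : ((Rf ×ˢ S) \ D).card = (Rf ×ˢ S).card - D.card := Finset.card_sdiff_of_subset hDsub
  have h3 : D.card ≤ (Rf ×ˢ S).card := Finset.card_le_card hDsub
  have h4 : (Rf ×ˢ S).card = H.index * S.card := by
    rw [Finset.card_product, hRcard]
  have h5 : H.index ≠ 0 := Subgroup.FiniteIndex.index_ne_zero
  omega

/-- Sharpened Schreier rank bound. -/
theorem rank_sharp {G : Type*} [Group G] [Group.FG G] (H : Subgroup G) [H.FiniteIndex] :
    Group.rank H + H.index ≤ H.index * Group.rank G + 1 := by
  haveI := H.fg_of_index_ne_zero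
  obtain ⟨S, hS₀, hS⟩ := Group.rank_spec G
  obtain ⟨T, hT, hTtop⟩ := schreier_sharp H hS
  have h := Group.rank_le hTtop
  rw [hS₀] at hT
  omega

/-- The reduced rank `χ₀(H) = max(0, rank H − 1)` of a subgroup (0 if not f.g.). -/
noncomputable def chi0 {G : Type*} [Group G] (H : Subgroup G) : ℕ :=
  if h : Group.FG H then @Group.rank H _ h - 1 else 0

/-- If `U` has finite index `n` in a free group `F` and `V` is a finitely generated
subgroup, then `χ₀(U ∩ V) ≤ n * χ₀(V)`. -/
theorem chi0_inf_le_index_mul (α : Type) (U V : Subgroup (FreeGroup α))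
    (hU : Group.FG U) (hV : Group.FG V) (n : ℕ) (hn : 0 < n) (hidx : U.index = n) :
    chi0 (U ⊓ V) ≤ n * chi0 V := by
  haveI hUFI : U.FiniteIndex := ⟨by rw [hidx]; exact hn.ne'⟩
  haveI : Group.FG V := hV
  set K : Subgroup V := U.subgroupOf V with hK
  haveI : K.FiniteIndex := Subgroup.instFiniteIndex_subgroupOf U V
  haveI hKfg : Group.FG K := K.fg_of_index_ne_zero
  have e : K ≃* ↥(U ⊓ V) :=
    (MulEquiv.subgroupCongr (Subgroup.inf_subgroupOf_right U V).symm).trans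
      (Subgroup.subgroupOfEquivOfLe (inf_le_right : U ⊓ V ≤ V))
  haveI hUV : Group.FG ↥(U ⊓ V) := Group.fg_of_surjective (f := e.toMonoidHom) e.surjective
  have hrank : Group.rank K = Group.rank ↥(U ⊓ V) := Group.rank_congr e
  have hsharp := rank_sharp K
  have hKle : K.index ≤ n := by
    have h1 : U.relIndex V ≤ U.relIndex ⊤ :=
      Subgroup.relIndex_le_of_le_right le_top
        (by rw [Subgroup.relIndex_top_right, hidx]; exact hn.ne')
    rw [Subgroup.relIndex_top_right, hidx] at h1
    exact h1
  have hchi1 : chi0 (U ⊓ V) = Group.rank ↥(U ⊓ V) - 1 := dif_pos hUV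
  have hchi2 : chi0 V = Group.rank V - 1 := dif_pos hV
  rw [hchi1, hchi2, ← hrank]
  cases hr : Group.rank V with
  | zero =>
      rw [hr, mul_zero] at hsharp
      have h5 : K.index ≠ 0 := Subgroup.FiniteIndex.index_ne_zero
      have h7 : (0 : ℕ) - 1 = 0 := rfl
      rw [h7, mul_zero]
      omega
  | succ r =>
      have h5 : K.index * (r + 1) = K.index * r + K.index := by ring
      have h6 : K.index * r ≤ n * r := Nat.mul_le_mul_right r hKle
      rw [hr] at hsharp
      simp only [Nat.succ_sub_one]
      omega
end

section
/- Howson's theorem: the intersection of two finitely generated subgroups of a free group is finitely generated. -/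
namespace HowsonAux

open FreeGroup List

variable {α : Type} [DecidableEq α]

/-- The set of (group elements of) suffixes of the reduced word of `x`. -/
def Suf (x : FreeGroup α) : Set (FreeGroup α) :=
  {q | ∃ s : List (α × Bool), s <:+ x.toWord ∧ q = FreeGroup.mk s}

lemma self_mem_suf (x : FreeGroup α) : x ∈ Suf x :=
  ⟨x.toWord, suffix_refl _, (FreeGroup.mk_toWord).symm⟩

lemma suf_finite (x : FreeGroup α) : (Suf x).Finite := by
  have : Suf x ⊆ FreeGroup.mk '' {s | s ∈ x.toWord.tails} := by
    rintro q ⟨s, hs, rfl⟩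
    exact ⟨s, by simpa [List.mem_tails] using hs, rfl⟩
  exact Set.Finite.subset (Set.Finite.image _ (x.toWord.tails.finite_toSet)) this

lemma suf_one (p : FreeGroup α) (hp : p ∈ Suf (1 : FreeGroup α)) : p = 1 := by
  rcases hp with ⟨s, hs, rfl⟩
  rw [FreeGroup.toWord_one] at hs
  rw [List.suffix_nil.mp hs]
  exact FreeGroup.one_eq_mk.symm

lemma reduce_tail_of_reduce_cons {l : α × Bool} {t : List (α × Bool)}
    (h : reduce (l :: t) = l :: t) : reduce t = t := by
  rw [reduce.cons] at h
  rcases ht : reduce t with _ | ⟨hd, tl⟩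
  · rw [ht] at h
    simp only at h
    have : t = [] := (List.cons_eq_cons.mp h).2.symm
    simp [this]
  · rw [ht] at h
    simp only at h
    by_cases hc : l.1 = hd.1 ∧ l.2 = !hd.2
    · simp only [hc, if_true] at h
      have h1 : (reduce t).length ≤ t.length := (Red.sublist (reduce.red)).length_le
      have h2 := congrArg List.length ht
      have h3 := congrArg List.length h
      simp at h2 h3
      omega
    · simp only [hc, if_false] at h
      exact (List.cons_eq_cons.mp h).2

lemma toWord_single_mul (l : α × Bool) (x : FreeGroup α) :
    (FreeGroup.mk [l] * x).toWord = l :: x.toWord ∨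
      (FreeGroup.mk [l] * x).toWord = x.toWord.tail := by
  have h1 : FreeGroup.mk [l] * x = FreeGroup.mk (l :: x.toWord) := by
    conv_lhs => rw [← FreeGroup.mk_toWord (x := x)]
    rw [FreeGroup.mul_mk]
    rfl
  rw [h1, FreeGroup.toWord_mk, FreeGroup.reduce.cons]
  rcases hx : reduce x.toWord with _ | ⟨hd, tl⟩
  · left
    rw [FreeGroup.reduce_toWord] at hx
    simp [hx]
  · rw [FreeGroup.reduce_toWord] at hx
    by_cases hc : l.1 = hd.1 ∧ l.2 = !hd.2
    · right; simp [hx, hc]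
    · left; simp [hx, hc]

lemma suf_single_mul (l : α × Bool) (x : FreeGroup α) :
    Suf (FreeGroup.mk [l] * x) ⊆ Suf x ∪ {FreeGroup.mk [l] * x} := by
  rintro p ⟨s, hs, rfl⟩
  rcases toWord_single_mul l x with h | h
  · rw [h] at hs
    rcases List.suffix_cons_iff.mp hs with h2 | h2
    · right
      have : FreeGroup.mk s = FreeGroup.mk (FreeGroup.mk [l] * x).toWord := by rw [h2, h]
      rw [this, FreeGroup.mk_toWord]
      rfl
    · exact Or.inl ⟨s, h2, rfl⟩
  · rw [h] at hs
    exact Or.inl ⟨s, hs.trans (List.tail_suffix _), rfl⟩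

lemma suf_mul_aux : ∀ (L : List (α × Bool)) (y x : FreeGroup α), y.toWord = L →
    ∀ p ∈ Suf (y * x), p ∈ Suf x ∨ ∃ q ∈ Suf y, p = q * x := by
  intro L
  induction L with
  | nil =>
    intro y x hy p hp
    have : y = 1 := FreeGroup.toWord_eq_nil_iff.mp hy
    subst this
    rw [one_mul] at hp
    exact Or.inl hp
  | cons l t ih =>
    intro y x hy p hp
    have hred : reduce (l :: t) = l :: t := by rw [← hy]; exact FreeGroup.reduce_toWord y
    have ht : (FreeGroup.mk t : FreeGroup α).toWord = t := by
      rw [FreeGroup.toWord_mk]; exact reduce_tail_of_reduce_cons hred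
    have hy' : y = FreeGroup.mk [l] * FreeGroup.mk t := by
      rw [FreeGroup.mul_mk, List.singleton_append, ← hy, FreeGroup.mk_toWord]
    have hp' : p ∈ Suf (FreeGroup.mk [l] * (FreeGroup.mk t * x)) := by
      rw [← mul_assoc, ← hy']; exact hp
    rcases suf_single_mul l (FreeGroup.mk t * x) hp' with h | h
    · rcases ih (FreeGroup.mk t) x ht p h with h' | ⟨q, hq, rfl⟩
      · exact Or.inl h'
      · refine Or.inr ⟨q, ?_, rfl⟩
        rcases hq with ⟨s, hs, rfl⟩
        rw [ht] at hs
        exact ⟨s, by rw [hy]; exact hs.trans (List.suffix_cons l t), rfl⟩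
    · refine Or.inr ⟨y, self_mem_suf y, ?_⟩
      rw [Set.mem_singleton_iff.mp h, hy', mul_assoc]

lemma suf_mul (y x : FreeGroup α) :
    ∀ p ∈ Suf (y * x), p ∈ Suf x ∨ ∃ q ∈ Suf y, p = q * x :=
  suf_mul_aux y.toWord y x rfl

omit [DecidableEq α] in
lemma invRev_append (s t : List (α × Bool)) :
    FreeGroup.invRev (s ++ t) = FreeGroup.invRev t ++ FreeGroup.invRev s := by
  simp [FreeGroup.invRev]

lemma suf_inv (x : FreeGroup α) : ∀ p ∈ Suf x⁻¹, ∃ q ∈ Suf x, p = q * x⁻¹ := by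
  rintro p ⟨s, hs, rfl⟩
  rw [FreeGroup.toWord_inv] at hs
  rcases hs with ⟨t, ht⟩
  have hw : x.toWord = FreeGroup.invRev s ++ FreeGroup.invRev t := by
    have h2 := congrArg FreeGroup.invRev ht
    rw [FreeGroup.invRev_invRev, invRev_append] at h2
    exact h2.symm
  have hx : x = (FreeGroup.mk s)⁻¹ * FreeGroup.mk (FreeGroup.invRev t) := by
    rw [FreeGroup.inv_mk, FreeGroup.mul_mk, ← hw, FreeGroup.mk_toWord]
  refine ⟨FreeGroup.mk (FreeGroup.invRev t), ⟨FreeGroup.invRev t, ⟨FreeGroup.invRev s, hw.symm⟩, rfl⟩, ?_⟩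
  rw [hx]
  group

/-- The key structural lemma: every suffix of (the reduced word of) an element of
`closure S` is, modulo `closure S` on the right, a suffix of a generator. -/
lemma claim1 (S : Set (FreeGroup α)) :
    ∀ h ∈ Subgroup.closure S, ∀ p ∈ Suf h,
      ∃ q, (q = 1 ∨ ∃ g ∈ S, q ∈ Suf g) ∧ ∃ u ∈ Subgroup.closure S, p = q * u := by
  intro h hh
  induction hh using Subgroup.closure_induction with
  | mem g hg =>
    intro p hp
    exact ⟨p, Or.inr ⟨g, hg, hp⟩, 1, one_mem _, (mul_one p).symm⟩
  | one =>
    intro p hp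
    exact ⟨1, Or.inl rfl, 1, one_mem _, by rw [suf_one p hp, one_mul]⟩
  | mul x y hx hy ihx ihy =>
    intro p hp
    rcases suf_mul x y p hp with h1 | ⟨q, hq, rfl⟩
    · exact ihy p h1
    · rcases ihx q hq with ⟨q₀, hq₀, u, hu, rfl⟩
      exact ⟨q₀, hq₀, u * y, mul_mem hu hy, by rw [mul_assoc]⟩
  | inv x hx ihx =>
    intro p hp
    rcases suf_inv x p hp with ⟨q, hq, rfl⟩
    rcases ihx q hq with ⟨q₀, hq₀, u, hu, rfl⟩
    exact ⟨q₀, hq₀, u * x⁻¹, mul_mem hu (inv_mem hx), by rw [mul_assoc]⟩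

/-- Prefix version of `claim1`. -/
lemma prefix_coset (S : Set (FreeGroup α)) (h : FreeGroup α) (hh : h ∈ Subgroup.closure S)
    {t : List (α × Bool)} (ht : t <+: h.toWord) :
    ∃ q, (q = 1 ∨ ∃ g ∈ S, q ∈ Suf g) ∧ ∃ u ∈ Subgroup.closure S,
      FreeGroup.mk t = u * q⁻¹ := by
  rcases ht with ⟨s, hs⟩
  have hsuf : FreeGroup.mk s ∈ Suf h := ⟨s, ⟨t, hs⟩, rfl⟩
  rcases claim1 S h hh (FreeGroup.mk s) hsuf with ⟨q, hq, u, hu, hqu⟩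
  have hmul : FreeGroup.mk t * FreeGroup.mk s = h := by
    rw [FreeGroup.mul_mk, hs, FreeGroup.mk_toWord]
  refine ⟨q, hq, h * u⁻¹, mul_mem hh (inv_mem hu), ?_⟩
  have : FreeGroup.mk t = h * (FreeGroup.mk s)⁻¹ := by
    rw [← hmul]; group
  rw [this, hqu]
  group

/-- Letters occurring in elements of a closure come from the generators. -/
lemma letters_mem (S : Set (FreeGroup α)) :
    ∀ h ∈ Subgroup.closure S, ∀ l ∈ h.toWord,
      ∃ g ∈ S, ∃ b : Bool, (l.1, b) ∈ g.toWord := by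
  intro h hh
  induction hh using Subgroup.closure_induction with
  | mem g hg =>
    intro l hl
    exact ⟨g, hg, l.2, by simpa using hl⟩
  | one =>
    intro l hl
    rw [FreeGroup.toWord_one] at hl
    simp at hl
  | mul x y hx hy ihx ihy =>
    intro l hl
    have := (FreeGroup.toWord_mul_sublist x y).subset hl
    rcases List.mem_append.mp this with h1 | h1
    · exact ihx l h1
    · exact ihy l h1
  | inv x hx ihx =>
    intro l hl
    rw [FreeGroup.toWord_inv] at hl
    simp only [FreeGroup.invRev, List.mem_reverse, List.mem_map] at hl
    rcases hl with ⟨l', hl', rfl⟩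
    rcases ihx l' hl' with ⟨g, hg, b, hb⟩
    exact ⟨g, hg, b, hb⟩

theorem inf_fg (U V : Subgroup (FreeGroup α)) (hU : U.FG) (hV : V.FG) : (U ⊓ V).FG := by
  classical
  rcases (Subgroup.fg_iff U).mp hU with ⟨SU, hSU, hSUfin⟩
  rcases (Subgroup.fg_iff V).mp hV with ⟨SV, hSV, hSVfin⟩
  set W : Subgroup (FreeGroup α) := U ⊓ V with hW
  -- the setoid of right cosets of W
  let s : Setoid (FreeGroup α) :=
    ⟨fun p p' => p' * p⁻¹ ∈ W, by
      refine ⟨fun p => by simpa using one_mem W, fun {p p'} h => ?_, fun {a b c} h1 h2 => ?_⟩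
      · simpa using inv_mem h
      · simpa [mul_assoc] using mul_mem h2 h1⟩
  let ρ : FreeGroup α → FreeGroup α := fun p => (Quotient.mk s p).out
  have hρ : ∀ p, p * (ρ p)⁻¹ ∈ W := fun p => @Quotient.mk_out _ s p
  have hρeq : ∀ p p', p' * p⁻¹ ∈ W → ρ p = ρ p' := by
    intro p p' h
    show (Quotient.mk s p).out = (Quotient.mk s p').out
    rw [Quotient.sound (s := s) h]
  -- finite sets of suffix representatives
  let QU : Set (FreeGroup α) := {1} ∪ ⋃ g ∈ SU, Suf g
  let QV : Set (FreeGroup α) := {1} ∪ ⋃ g ∈ SV, Suf g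
  have hQUfin : QU.Finite :=
    (Set.finite_singleton 1).union (Set.Finite.biUnion hSUfin fun g _ => suf_finite g)
  have hQVfin : QV.Finite :=
    (Set.finite_singleton 1).union (Set.Finite.biUnion hSVfin fun g _ => suf_finite g)
  -- the finite set of representatives ρ p for p a prefix of a word of W
  let Z : FreeGroup α → FreeGroup α → Set (FreeGroup α) := fun qU qV =>
    {x | ∃ p, x = ρ p ∧ (∃ u ∈ U, p = u * qU⁻¹) ∧ (∃ v ∈ V, p = v * qV⁻¹)}
  have hZsub : ∀ qU qV, (Z qU qV).Subsingleton := by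
    rintro qU qV x ⟨p, rfl, ⟨u, hu, rfl⟩, ⟨v, hv, hpv⟩⟩ x' ⟨p', rfl, ⟨u', hu', rfl⟩, ⟨v', hv', hpv'⟩⟩
    refine hρeq _ _ ?_
    have h1 : u' * qU⁻¹ * (u * qU⁻¹)⁻¹ = u' * u⁻¹ := by group
    have h2 : u' * qU⁻¹ * (u * qU⁻¹)⁻¹ ∈ V := by
      rw [hpv', hpv, show v' * qV⁻¹ * (v * qV⁻¹)⁻¹ = v' * v⁻¹ by group]
      exact mul_mem hv' (inv_mem hv)
    have h3 : u' * qU⁻¹ * (u * qU⁻¹)⁻¹ ∈ U := by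
      rw [h1]; exact mul_mem hu' (inv_mem hu)
    exact Subgroup.mem_inf.mpr ⟨h3, h2⟩
  let P : Set (FreeGroup α) := ⋃ qU ∈ QU, ⋃ qV ∈ QV, Z qU qV
  have hPfin : P.Finite :=
    Set.Finite.biUnion hQUfin fun qU _ =>
      Set.Finite.biUnion hQVfin fun qV _ => (hZsub qU qV).finite
  -- the finite set of letters
  let Lbase : Set α := ⋃ g ∈ SU, {a | ∃ b : Bool, (a, b) ∈ g.toWord}
  have hLfin : Lbase.Finite := by
    refine Set.Finite.biUnion hSUfin fun g _ => ?_
    have : {a | ∃ b : Bool, (a, b) ∈ g.toWord} ⊆ Prod.fst '' {l | l ∈ g.toWord} := by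
      rintro a ⟨b, hb⟩; exact ⟨(a, b), hb, rfl⟩
    exact Set.Finite.subset (Set.Finite.image _ g.toWord.finite_toSet) this
  -- the generating set
  let Gen : Set (FreeGroup α) := {g | g ∈ W ∧ (g = ρ 1 ∨
    ∃ r ∈ P, ∃ r' ∈ P, ∃ a ∈ Lbase, ∃ b : Bool, g = r * FreeGroup.mk [(a, b)] * r'⁻¹)}
  have hGenfin : Gen.Finite := by
    have hsub : Gen ⊆ insert (ρ 1) (⋃ r ∈ P, ⋃ r' ∈ P, ⋃ a ∈ Lbase,
        ({r * FreeGroup.mk [(a, true)] * r'⁻¹, r * FreeGroup.mk [(a, false)] * r'⁻¹} :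
          Set (FreeGroup α))) := by
      rintro g ⟨-, rfl | ⟨r, hr, r', hr', a, ha, b, rfl⟩⟩
      · exact Set.mem_insert _ _
      · refine Set.mem_insert_of_mem _ ?_
        refine Set.mem_biUnion hr (Set.mem_biUnion hr' (Set.mem_biUnion ha ?_))
        cases b
        · exact Set.mem_insert_of_mem _ rfl
        · exact Set.mem_insert _ _
    refine Set.Finite.subset (Set.Finite.insert _ ?_) hsub
    exact Set.Finite.biUnion hPfin fun r _ => Set.Finite.biUnion hPfin fun r' _ =>
      Set.Finite.biUnion hLfin fun a _ => (Set.finite_singleton _).insert _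
  refine (Subgroup.fg_iff W).mpr ⟨Gen, ?_, hGenfin⟩
  -- closure Gen = W
  refine le_antisymm ((Subgroup.closure_le W).mpr fun g hg => hg.1) ?_
  intro w hw
  have hρ1W : ρ 1 ∈ W := by
    have := hρ 1
    rw [one_mul] at this
    simpa using inv_mem this
  have hρ1Gen : ρ 1 ∈ Gen := ⟨hρ1W, Or.inl rfl⟩
  have hwU : w ∈ U := (Subgroup.mem_inf.mp hw).1
  have hwV : w ∈ V := (Subgroup.mem_inf.mp hw).2
  have hwCU : w ∈ Subgroup.closure SU := by rw [hSU]; exact hwU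
  have hwCV : w ∈ Subgroup.closure SV := by rw [hSV]; exact hwV
  -- prefixes of w are in P after applying ρ
  have hPmem : ∀ t : List (α × Bool), t <+: w.toWord → ρ (FreeGroup.mk t) ∈ P := by
    intro t ht
    rcases prefix_coset SU w hwCU ht with ⟨qU, hqU, u, hu, hequ⟩
    rcases prefix_coset SV w hwCV ht with ⟨qV, hqV, v, hv, heqv⟩
    have hqU' : qU ∈ QU := by
      rcases hqU with rfl | ⟨g, hg, hqg⟩
      · exact Or.inl rfl
      · exact Or.inr (Set.mem_biUnion hg hqg)
    have hqV' : qV ∈ QV := by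
      rcases hqV with rfl | ⟨g, hg, hqg⟩
      · exact Or.inl rfl
      · exact Or.inr (Set.mem_biUnion hg hqg)
    refine Set.mem_biUnion hqU' (Set.mem_biUnion hqV' ?_)
    exact ⟨FreeGroup.mk t, rfl, ⟨u, by rw [← hSU]; exact hu, hequ⟩,
      ⟨v, by rw [← hSV]; exact hv, heqv⟩⟩
  -- the telescoping induction
  set L : List (α × Bool) := w.toWord with hL
  have key : ∀ i, i ≤ L.length →
      ρ 1 * FreeGroup.mk (L.take i) * (ρ (FreeGroup.mk (L.take i)))⁻¹ ∈
        Subgroup.closure Gen := by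
    intro i
    induction i with
    | zero =>
      intro _
      simp only [List.take_zero]
      have : ρ 1 * FreeGroup.mk [] * (ρ (FreeGroup.mk []))⁻¹ = 1 := by
        rw [← FreeGroup.one_eq_mk]; group
      rw [this]; exact one_mem _
    | succ i ih =>
      intro hi
      have hiL : i < L.length := by omega
      have hstep : FreeGroup.mk (L.take (i + 1)) =
          FreeGroup.mk (L.take i) * FreeGroup.mk [L[i]] := by
        rw [FreeGroup.mul_mk, List.take_succ, List.getElem?_eq_getElem hiL]
        rfl
      have hlmem : L[i] ∈ L := List.getElem_mem hiL
      rcases letters_mem SU w hwCU L[i] hlmem with ⟨g0, hg0, b, hb⟩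
      have hlbase : (L[i]).1 ∈ Lbase := Set.mem_biUnion hg0 ⟨b, hb⟩
      have hr : ρ (FreeGroup.mk (L.take i)) ∈ P := hPmem _ (List.take_prefix i L)
      have hr' : ρ (FreeGroup.mk (L.take (i + 1))) ∈ P := hPmem _ (List.take_prefix (i + 1) L)
      set g : FreeGroup α := ρ (FreeGroup.mk (L.take i)) * FreeGroup.mk [L[i]] *
        (ρ (FreeGroup.mk (L.take (i + 1))))⁻¹ with hgdef
      have hgW : g ∈ W := by
        have hid : g = (FreeGroup.mk (L.take i) * (ρ (FreeGroup.mk (L.take i)))⁻¹)⁻¹ *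
            (FreeGroup.mk (L.take (i + 1)) * (ρ (FreeGroup.mk (L.take (i + 1))))⁻¹) := by
          rw [hgdef, hstep]; group
        rw [hid]
        exact mul_mem (inv_mem (hρ _)) (hρ _)
      have hgGen : g ∈ Gen := by
        refine ⟨hgW, Or.inr ⟨_, hr, _, hr', (L[i]).1, hlbase, (L[i]).2, ?_⟩⟩
        rw [hgdef]
      have h2 : ρ 1 * FreeGroup.mk (L.take (i + 1)) * (ρ (FreeGroup.mk (L.take (i + 1))))⁻¹ =
          (ρ 1 * FreeGroup.mk (L.take i) * (ρ (FreeGroup.mk (L.take i)))⁻¹) * g := by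
        rw [hgdef, hstep]; group
      rw [h2]
      exact mul_mem (ih (by omega)) (Subgroup.subset_closure hgGen)
  have hkey := key L.length le_rfl
  rw [List.take_length] at hkey
  have hmkL : FreeGroup.mk L = w := FreeGroup.mk_toWord
  rw [hmkL] at hkey
  have hρw : ρ w = ρ 1 := hρeq w 1 (by simpa using inv_mem hw)
  rw [hρw] at hkey
  have hfin : w = (ρ 1)⁻¹ * (ρ 1 * w * (ρ 1)⁻¹) * ρ 1 := by group
  rw [hfin]
  exact mul_mem (mul_mem (inv_mem (Subgroup.subset_closure hρ1Gen)) hkey)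
    (Subgroup.subset_closure hρ1Gen)

end HowsonAux

/-- Howson's theorem: the intersection of two finitely generated subgroups of a free
group is finitely generated. -/
theorem howson (α : Type) (U V : Subgroup (FreeGroup α))
    (hU : Group.FG U) (hV : Group.FG V) : Group.FG ↥(U ⊓ V) := by
  classical
  rw [Group.fg_iff_subgroup_fg] at hU hV ⊢
  exact HowsonAux.inf_fg U V hU hV
end

section
/- If the Strengthened Hanna Neumann inequality ∑_{x∈T} χ₀(U ∩ x⁻¹Vx) ≤ χ₀(U)χ₀(V) holds for all finitely generated subgroups U, V of the free group of rank 2, then it holds for all finitely generated subgroups of any finitely generated free group. -/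
open scoped Classical

/-- The conjugate subgroup `x⁻¹ H x`. -/
def conjSubgroup {G : Type*} [Group G] (x : G) (H : Subgroup G) : Subgroup G :=
  H.map (MulAut.conj x⁻¹).toMonoidHom

/-- The Strengthened Hanna Neumann inequality for the pair `U, V`: for any finite set
of representatives of pairwise distinct double cosets `VxU`,
`∑_{x∈T} χ₀(U ∩ x⁻¹Vx) ≤ χ₀(U)·χ₀(V)`. -/
noncomputable def SHNIneq {G : Type*} [Group G] (U V : Subgroup G) : Prop :=
  ∀ T : Finset G, (∀ x ∈ T, ∀ y ∈ T, DoubleCoset.mk V U x = DoubleCoset.mk V U y → x = y) →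
    ∑ x ∈ T, chi0 (U ⊓ conjSubgroup x V) ≤ chi0 U * chi0 V

set_option linter.unusedSectionVars false

namespace SHNEmbed
open FreeGroup List

abbrev ap : Bool × Bool := (false, true)
abbrev am : Bool × Bool := (false, false)

variable {α : Type*} [DecidableEq α]

lemma reduce_cons_eq (x : α × Bool) (l : List (α × Bool)) (hl : FreeGroup.reduce l = l)
    (hh : l.head? ≠ some (x.1, !x.2)) : FreeGroup.reduce (x :: l) = x :: l := by
  rw [FreeGroup.reduce.cons, hl]
  cases l with
  | nil => rfl
  | cons y t =>
    simp only
    rw [if_neg]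
    rintro ⟨h1, h2⟩
    apply hh
    simp only [List.head?_cons, Option.some_inj]
    obtain ⟨y1, y2⟩ := y
    simp_all

lemma reduce_cancel_cons (x : α × Bool) (l : List (α × Bool))
    (h : FreeGroup.reduce (x :: l) = x :: l) :
    FreeGroup.reduce ((x.1, !x.2) :: x :: l) = l := by
  rw [FreeGroup.reduce.cons, h]
  simp

lemma reduced_of_reduced_cons {x : α × Bool} {l : List (α × Bool)}
    (h : FreeGroup.reduce (x :: l) = x :: l) : FreeGroup.reduce l = l := by
  rw [FreeGroup.reduce.cons] at h
  rcases hl : FreeGroup.reduce l with _ | ⟨y, t⟩ <;> rw [hl] at h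
  · simp only at h
    have : [] = l := by injection h
    exact this
  · change (if x.1 = y.1 ∧ x.2 = !y.2 then t else x :: y :: t) = x :: l at h
    by_cases hc : x.1 = y.1 ∧ x.2 = !y.2
    · rw [if_pos hc] at h
      exfalso
      have hred := FreeGroup.Red.length_le (FreeGroup.reduce.red (L := l))
      rw [hl] at hred
      have := congrArg List.length h
      simp at this hred
      omega
    · rw [if_neg hc] at h
      have : y :: t = l := by injection h
      rw [← this, ← hl]

lemma head_ne_of_reduced_cons {x : α × Bool} {l : List (α × Bool)}
    (h : FreeGroup.reduce (x :: l) = x :: l) : l.head? ≠ some (x.1, !x.2) := by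
  intro hh
  cases l with
  | nil => simp at hh
  | cons y t =>
    simp only [List.head?_cons, Option.some_inj] at hh
    have hred := reduced_of_reduced_cons h
    rw [FreeGroup.reduce.cons, hred] at h
    change (if x.1 = y.1 ∧ x.2 = !y.2 then t else x :: y :: t) = x :: y :: t at h
    rw [if_pos (by subst hh; exact ⟨rfl, by simp⟩)] at h
    have := congrArg List.length h
    simp at this
    omega

lemma head?_replicate_append (j : ℕ) (x : α × Bool) (t : List (α × Bool)) :
    (List.replicate j x ++ t).head? = if j = 0 then t.head? else some x := by
  cases j <;> simp [List.replicate_succ]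

lemma reduce_replicate_append (x : α × Bool) (k : ℕ) (l : List (α × Bool))
    (hl : FreeGroup.reduce l = l) (hh : l.head? ≠ some (x.1, !x.2)) :
    FreeGroup.reduce (List.replicate k x ++ l) = List.replicate k x ++ l := by
  induction k with
  | zero => simpa
  | succ k ih =>
    rw [List.replicate_succ, List.cons_append]
    refine reduce_cons_eq x _ ih ?_
    rw [head?_replicate_append]
    split
    · exact hh
    · intro hx
      have := congrArg Prod.snd (Option.some.inj hx)
      simp at this

lemma reduce_cons_reduce (y : α × Bool) (N : List (α × Bool)) :
    FreeGroup.reduce (y :: N) = FreeGroup.reduce (y :: FreeGroup.reduce N) := by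
  refine FreeGroup.reduce.eq_of_red ?_
  have := FreeGroup.Red.append_append (FreeGroup.Red.refl (L := [y])) (FreeGroup.reduce.red (L := N))
  simpa using this

lemma reduce_cancel_le (x : α × Bool) (t : List (α × Bool)) (ht : FreeGroup.reduce t = t)
    (h2 : t.head? ≠ some (x.1, !x.2)) :
    ∀ k m : ℕ, k ≤ m → FreeGroup.reduce (List.replicate k (x.1, !x.2) ++ (List.replicate m x ++ t)) =
      List.replicate (m - k) x ++ t := by
  intro k
  induction k with
  | zero =>
    intro m _
    simpa using reduce_replicate_append x m t ht h2
  | succ k ih =>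
    intro m hm
    have e1 : List.replicate (k+1) (x.1, !x.2) ++ (List.replicate m x ++ t)
        = (x.1, !x.2) :: (List.replicate k (x.1, !x.2) ++ (List.replicate m x ++ t)) := by
      rw [List.replicate_succ]; simp
    rw [e1, reduce_cons_reduce, ih m (by omega)]
    have e2 : List.replicate (m - k) x ++ t = x :: (List.replicate (m - (k+1)) x ++ t) := by
      have h3 : m - k = (m - (k+1)) + 1 := by omega
      rw [h3, List.replicate_succ]; simp
    rw [e2]
    have hxr : FreeGroup.reduce (x :: (List.replicate (m - (k+1)) x ++ t))
        = x :: (List.replicate (m - (k+1)) x ++ t) := by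
      have := reduce_replicate_append x (m - (k+1) + 1) t ht h2
      rw [List.replicate_succ, List.cons_append] at this
      exact this
    rw [reduce_cancel_cons x _ hxr]

lemma reduce_cancel_ge (x : α × Bool) (t : List (α × Bool)) (ht : FreeGroup.reduce t = t)
    (h1 : t.head? ≠ some x) (h2 : t.head? ≠ some (x.1, !x.2)) :
    ∀ k m : ℕ, m ≤ k → FreeGroup.reduce (List.replicate k (x.1, !x.2) ++ (List.replicate m x ++ t)) =
      List.replicate (k - m) (x.1, !x.2) ++ t := by
  have h1' : t.head? ≠ some ((x.1, !x.2).1, !(x.1, !x.2).2) := by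
    simpa using h1
  intro k
  induction k with
  | zero =>
    intro m hm
    have : m = 0 := by omega
    subst this
    simpa using ht
  | succ k ih =>
    intro m hm
    have e1 : List.replicate (k+1) (x.1, !x.2) ++ (List.replicate m x ++ t)
        = (x.1, !x.2) :: (List.replicate k (x.1, !x.2) ++ (List.replicate m x ++ t)) := by
      rw [List.replicate_succ]; simp
    rw [e1, reduce_cons_reduce]
    rcases Nat.lt_or_ge k m with hc | hc
    · have hm' : m = k + 1 := by omega
      subst hm'
      rw [reduce_cancel_le x t ht h2 k (k+1) (by omega)]
      have h3 : k + 1 - k = 1 := by omega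
      rw [h3]
      have h4 : List.replicate 1 x ++ t = x :: t := by simp
      rw [h4]
      have hxt : FreeGroup.reduce (x :: t) = x :: t := reduce_cons_eq x t ht h2
      rw [reduce_cancel_cons x t hxt]
      simp
    · rw [ih m hc]
      have hred : FreeGroup.reduce (List.replicate (k - m) (x.1, !x.2) ++ t)
          = List.replicate (k - m) (x.1, !x.2) ++ t :=
        reduce_replicate_append (x.1, !x.2) (k - m) t ht h1'
      have hhd : (List.replicate (k - m) (x.1, !x.2) ++ t).head?
          ≠ some ((x.1, !x.2).1, !(x.1, !x.2).2) := by
        rw [head?_replicate_append]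
        split
        · exact h1'
        · intro hx
          have := congrArg Prod.snd (Option.some.inj hx)
          simp at this
      rw [reduce_cons_eq _ _ hred hhd]
      have h5 : k + 1 - m = (k - m) + 1 := by omega
      rw [h5, List.replicate_succ]
      simp

lemma exists_decomp (x : α × Bool) (l : List (α × Bool)) :
    ∃ m t, l = List.replicate m x ++ t ∧ t.head? ≠ some x := by
  induction l with
  | nil => exact ⟨0, [], by simp, by simp⟩
  | cons y l ih =>
    obtain ⟨m, t, he, ht⟩ := ih
    by_cases hy : y = x
    · subst hy
      exact ⟨m + 1, t, by rw [List.replicate_succ]; simp [he], ht⟩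
    · exact ⟨0, y :: l, by simp, by simpa using hy⟩

lemma reduced_strip : ∀ (m : ℕ) (x : α × Bool) (t : List (α × Bool)),
    FreeGroup.reduce (List.replicate m x ++ t) = List.replicate m x ++ t →
    FreeGroup.reduce t = t ∧ (1 ≤ m → t.head? ≠ some (x.1, !x.2)) := by
  intro m
  induction m with
  | zero => intro x t h; exact ⟨by simpa using h, by omega⟩
  | succ m ih =>
    intro x t h
    rw [List.replicate_succ, List.cons_append] at h
    have h' := reduced_of_reduced_cons h
    obtain ⟨ht, hm⟩ := ih x t h'
    refine ⟨ht, fun _ => ?_⟩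
    rcases Nat.eq_zero_or_pos m with h0 | h0
    · subst h0
      simp only [List.replicate_zero, List.nil_append] at h
      exact head_ne_of_reduced_cons h
    · exact hm (by omega)


lemma prefix_get (i : ℕ) (y : Bool × Bool) (w : List (Bool × Bool))
    (h : (List.replicate i ap ++ [y]) <+: w) : ∃ hw : i < w.length, w[i] = y := by
  have hl : i + 1 ≤ w.length := by simpa using h.length_le
  refine ⟨by omega, ?_⟩
  have hg := h.getElem (i := i) (by simp)
  rw [← hg, List.getElem_append_right (by simp)]
  simp

lemma prefix_get_lt {i j : ℕ} (hij : i < j) (y : Bool × Bool) (w : List (Bool × Bool))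
    (h : (List.replicate j ap ++ [y]) <+: w) : ∃ hw : i < w.length, w[i] = ap := by
  have hl : j + 1 ≤ w.length := by simpa using h.length_le
  refine ⟨by omega, ?_⟩
  have hg := h.getElem (i := i) (by simp; omega)
  rw [← hg, List.getElem_append_left (by simpa using hij)]
  simp

lemma prefix_unique {i j : ℕ} {s s' : Bool} {w : List (Bool × Bool)}
    (h1 : (List.replicate i ap ++ [(true, s)]) <+: w)
    (h2 : (List.replicate j ap ++ [(true, s')]) <+: w) : i = j ∧ s = s' := by
  rcases lt_trichotomy i j with hc | hc | hc
  · obtain ⟨hw, he⟩ := prefix_get i _ w h1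
    obtain ⟨hw2, he2⟩ := prefix_get_lt hc _ w h2
    rw [he] at he2
    exact absurd he2 (by simp)
  · subst hc
    obtain ⟨hw, he⟩ := prefix_get i _ w h1
    obtain ⟨hw2, he2⟩ := prefix_get i _ w h2
    rw [he] at he2
    simp only [Prod.mk.injEq] at he2
    exact ⟨rfl, he2.2⟩
  · obtain ⟨hw, he⟩ := prefix_get j _ w h2
    obtain ⟨hw2, he2⟩ := prefix_get_lt hc _ w h1
    rw [he] at he2
    exact absurd he2 (by simp)

def W (k : ℕ) (s : Bool) : List (Bool × Bool) :=
  List.replicate k ap ++ (true, s) :: List.replicate k am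

lemma reduce_append_reduce (A N : List (Bool × Bool)) :
    FreeGroup.reduce (A ++ N) = FreeGroup.reduce (A ++ FreeGroup.reduce N) :=
  FreeGroup.reduce.eq_of_red (FreeGroup.Red.append_append FreeGroup.Red.refl FreeGroup.reduce.red)

lemma main_prefix (s : Bool) (k : ℕ) (hk : 0 < k) (l : List (Bool × Bool))
    (hl : FreeGroup.reduce l = l)
    (hQ : ¬ (List.replicate k ap ++ [(true, !s)]) <+: l) :
    (List.replicate k ap ++ [(true, s)]) <+: FreeGroup.reduce (W k s ++ l) := by
  have hhead : (FreeGroup.reduce (List.replicate k am ++ l)).head? ≠ some (true, !s) := by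
    obtain ⟨m, t, rfl, ht⟩ := exists_decomp ap l
    have hdec := reduced_strip m ap t hl
    have ht2 : FreeGroup.reduce t = t := hdec.1
    by_cases hm : m = 0
    · subst hm
      simp only [List.replicate_zero, List.nil_append] at *
      have hr2 : FreeGroup.reduce (List.replicate k am ++ t) = List.replicate k am ++ t :=
        reduce_replicate_append am k t ht2 ht
      rw [hr2, head?_replicate_append, if_neg (by omega)]
      simp
    · have ht3 : t.head? ≠ some am := hdec.2 (by omega)
      rcases le_or_gt k m with hkm | hkm
      · have hr2 : FreeGroup.reduce (List.replicate k am ++ (List.replicate m ap ++ t))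
            = List.replicate (m - k) ap ++ t := reduce_cancel_le ap t ht2 ht3 k m hkm
        rw [hr2, head?_replicate_append]
        rcases eq_or_lt_of_le hkm with he | hlt2
        · rw [if_pos (by omega)]
          intro hx
          apply hQ
          cases t with
          | nil => simp at hx
          | cons y t' =>
            simp only [List.head?_cons, Option.some_inj] at hx
            subst hx
            exact ⟨t', by simp [he]⟩
        · rw [if_neg (by omega)]
          simp
      · have hr2 : FreeGroup.reduce (List.replicate k am ++ (List.replicate m ap ++ t))
            = List.replicate (k - m) am ++ t :=
          reduce_cancel_ge ap t ht2 ht ht3 k m (le_of_lt hkm)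
        rw [hr2, head?_replicate_append, if_neg (by omega)]
        simp
  have hrr : FreeGroup.reduce (FreeGroup.reduce (List.replicate k am ++ l))
      = FreeGroup.reduce (List.replicate k am ++ l) := FreeGroup.reduce.idem
  have hcons : FreeGroup.reduce ((true, s) :: FreeGroup.reduce (List.replicate k am ++ l))
      = (true, s) :: FreeGroup.reduce (List.replicate k am ++ l) :=
    reduce_cons_eq _ _ hrr hhead
  have hfull : FreeGroup.reduce
        (List.replicate k ap ++ ((true, s) :: FreeGroup.reduce (List.replicate k am ++ l)))
      = List.replicate k ap ++ ((true, s) :: FreeGroup.reduce (List.replicate k am ++ l)) := by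
    refine reduce_replicate_append ap k _ hcons ?_
    simp
  have he : W k s ++ l = (List.replicate k ap ++ [(true, s)]) ++ (List.replicate k am ++ l) := by
    simp [W]
  rw [he, reduce_append_reduce (List.replicate k ap ++ [(true, s)]) (List.replicate k am ++ l)]
  have he2 : (List.replicate k ap ++ [(true, s)]) ++ FreeGroup.reduce (List.replicate k am ++ l)
      = List.replicate k ap ++ ((true, s) :: FreeGroup.reduce (List.replicate k am ++ l)) := by
    simp
  rw [he2, hfull]
  refine ⟨FreeGroup.reduce (List.replicate k am ++ l), ?_⟩
  simp

lemma inv_W (k : ℕ) : (FreeGroup.mk (W k true))⁻¹ = FreeGroup.mk (W k false) := by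
  rw [FreeGroup.inv_mk]
  congr 1
  simp [FreeGroup.invRev, W, List.map_append, List.reverse_append, List.map_replicate,
    List.reverse_replicate]

lemma exists_embedding_bool (n : ℕ) (hn : 2 ≤ n) :
    ∃ φ : FreeGroup (Fin n) →* FreeGroup Bool, Function.Injective φ := by
  haveI : Nontrivial (Fin n) := ⟨⟨0, by omega⟩, ⟨1, by omega⟩, by simp [Fin.ext_iff]⟩
  set a : Fin n → FreeGroup Bool := fun i => FreeGroup.mk (W ((i : ℕ) + 1) true) with ha
  refine ⟨FreeGroup.lift a, FreeGroup.injective_lift_of_ping_pong a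
    (fun i => {w : FreeGroup Bool | (List.replicate ((i : ℕ) + 1) ap ++ [(true, true)]) <+: w.toWord})
    (fun i => {w : FreeGroup Bool | (List.replicate ((i : ℕ) + 1) ap ++ [(true, false)]) <+: w.toWord})
    ?_ ?_ ?_ ?_ ?_ ?_⟩
  · intro i
    refine ⟨FreeGroup.mk (List.replicate ((i : ℕ) + 1) ap ++ [(true, true)]), ?_⟩
    show (List.replicate _ ap ++ [(true, true)]) <+: _
    rw [FreeGroup.toWord_mk,
      reduce_replicate_append ap _ [(true, true)] rfl (by simp)]
  · intro i j hij
    refine Set.disjoint_left.mpr fun w hwi hwj => ?_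
    exact hij (Fin.ext (by have := (prefix_unique hwi hwj).1; omega))
  · intro i j hij
    refine Set.disjoint_left.mpr fun w hwi hwj => ?_
    exact hij (Fin.ext (by have := (prefix_unique hwi hwj).1; omega))
  · intro i j
    refine Set.disjoint_left.mpr fun w hwi hwj => ?_
    exact absurd (prefix_unique hwi hwj).2 (by simp)
  · rintro i _ ⟨u, hu, rfl⟩
    show (List.replicate ((i : ℕ) + 1) ap ++ [(true, true)]) <+: (a i • u).toWord
    have hmul : a i • u = FreeGroup.mk (W ((i : ℕ) + 1) true ++ u.toWord) := by
      rw [smul_eq_mul, ha]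
      conv_lhs => rw [← FreeGroup.mk_toWord (x := u)]
      rw [FreeGroup.mul_mk]
    rw [hmul, FreeGroup.toWord_mk]
    exact main_prefix true _ (by omega) u.toWord (FreeGroup.reduce_toWord u) (by simpa using hu)
  · rintro i _ ⟨u, hu, rfl⟩
    show (List.replicate ((i : ℕ) + 1) ap ++ [(true, false)]) <+: ((a⁻¹) i • u).toWord
    have hainv : (a⁻¹) i = FreeGroup.mk (W ((i : ℕ) + 1) false) := by
      rw [Pi.inv_apply, ha]
      exact inv_W _
    have hmul : (a⁻¹) i • u = FreeGroup.mk (W ((i : ℕ) + 1) false ++ u.toWord) := by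
      rw [smul_eq_mul, hainv]
      conv_lhs => rw [← FreeGroup.mk_toWord (x := u)]
      rw [FreeGroup.mul_mk]
    rw [hmul, FreeGroup.toWord_mk]
    exact main_prefix false _ (by omega) u.toWord (FreeGroup.reduce_toWord u) (by simpa using hu)

lemma exists_embedding (n : ℕ) :
    ∃ φ : FreeGroup (Fin n) →* FreeGroup (Fin 2), Function.Injective φ := by
  match n, Nat.lt_or_ge n 2 with
  | 0, _ =>
    refine ⟨FreeGroup.map (Fin.castLE (by omega)), fun x y _ => Subsingleton.elim x y⟩
  | 1, _ =>
    refine ⟨FreeGroup.map (Fin.castLE (by omega)), ?_⟩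
    have hretr : ∀ z : FreeGroup (Fin 1),
        FreeGroup.map (fun _ : Fin 2 => (0 : Fin 1))
          (FreeGroup.map (Fin.castLE (by omega)) z) = z := by
      intro z
      rw [FreeGroup.map.comp]
      have hc : ((fun _ : Fin 2 => (0 : Fin 1)) ∘ Fin.castLE (by omega)) = fun z : Fin 1 => z := by
        funext w
        exact Subsingleton.elim _ _
      rw [hc, FreeGroup.map.id']
    intro x y hxy
    calc x = _ := (hretr x).symm
      _ = _ := by rw [show (FreeGroup.map (Fin.castLE (by omega)) x : FreeGroup (Fin 2)) =
            FreeGroup.map (Fin.castLE (by omega)) y from hxy]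
      _ = y := hretr y
  | (m + 2), _ =>
    obtain ⟨φ, hφ⟩ := exists_embedding_bool (m + 2) (by omega)
    exact ⟨(FreeGroup.freeGroupCongr finTwoEquiv.symm).toMonoidHom.comp φ,
      ((FreeGroup.freeGroupCongr finTwoEquiv.symm).injective).comp hφ⟩

end SHNEmbed


section Transfer
variable {G K : Type*} [Group G] [Group K]

lemma fg_map_of_injective (φ : G →* K) (hφ : Function.Injective φ) (S : Subgroup G)
    (hS : Group.FG S) : Group.FG (S.map φ) :=
  @Group.fg_of_surjective _ _ _ _ hS (S.equivMapOfInjective φ hφ).toMonoidHom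
    (S.equivMapOfInjective φ hφ).surjective

lemma chi0_map_of_injective (φ : G →* K) (hφ : Function.Injective φ) (S : Subgroup G) :
    chi0 (S.map φ) = chi0 S := by
  unfold chi0
  by_cases hS : Group.FG S
  · have h2 : Group.FG (S.map φ) := fg_map_of_injective φ hφ S hS
    rw [dif_pos hS, dif_pos h2]
    congr 1
    exact @Group.rank_congr _ _ _ _ h2 hS (S.equivMapOfInjective φ hφ).symm
  · have h2 : ¬ Group.FG (S.map φ) := by
      intro h2
      exact hS (@Group.fg_of_surjective _ _ _ _ h2
        (S.equivMapOfInjective φ hφ).symm.toMonoidHom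
        (S.equivMapOfInjective φ hφ).symm.surjective)
    rw [dif_neg hS, dif_neg h2]

lemma conjSubgroup_map (φ : G →* K) (x : G) (V : Subgroup G) :
    (conjSubgroup x V).map φ = conjSubgroup (φ x) (V.map φ) := by
  unfold conjSubgroup
  rw [Subgroup.map_map, Subgroup.map_map]
  congr 1
  ext g
  simp [MulAut.conj]

lemma SHNIneq.of_map (φ : G →* K) (hφ : Function.Injective φ) (U V : Subgroup G)
    (h : SHNIneq (U.map φ) (V.map φ)) : SHNIneq U V := by
  intro T hT
  have key : ∀ x : G,
      chi0 (U.map φ ⊓ conjSubgroup (φ x) (V.map φ)) = chi0 (U ⊓ conjSubgroup x V) := by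
    intro x
    rw [← conjSubgroup_map, ← Subgroup.map_inf _ _ φ hφ, chi0_map_of_injective φ hφ]
  have hT' : ∀ x' ∈ T.image φ, ∀ y' ∈ T.image φ,
      DoubleCoset.mk (V.map φ) (U.map φ) x' = DoubleCoset.mk (V.map φ) (U.map φ) y' → x' = y' := by
    intro x' hx' y' hy' hxy
    obtain ⟨x, hx, rfl⟩ := Finset.mem_image.1 hx'
    obtain ⟨y, hy, rfl⟩ := Finset.mem_image.1 hy'
    rw [DoubleCoset.eq] at hxy
    obtain ⟨v', hv', u', hu', heq⟩ := hxy
    obtain ⟨v, hv, rfl⟩ := hv'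
    obtain ⟨u, hu, rfl⟩ := hu'
    have : y = v * x * u := hφ (by simpa using heq)
    have hd : DoubleCoset.mk V U x = DoubleCoset.mk V U y :=
      (DoubleCoset.eq V U x y).2 ⟨v, hv, u, hu, this⟩
    exact congrArg φ (hT x hx y hy hd)
  have hsum := h (T.image φ) hT'
  rw [Finset.sum_image (fun x hx y hy hxy => hφ hxy)] at hsum
  calc ∑ x ∈ T, chi0 (U ⊓ conjSubgroup x V)
      = ∑ x ∈ T, chi0 (U.map φ ⊓ conjSubgroup (φ x) (V.map φ)) := by
        exact Finset.sum_congr rfl fun x _ => (key x).symm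
    _ ≤ chi0 (U.map φ) * chi0 (V.map φ) := hsum
    _ = chi0 U * chi0 V := by rw [chi0_map_of_injective φ hφ, chi0_map_of_injective φ hφ]

end Transfer

/-- If the Strengthened Hanna Neumann inequality holds for all finitely generated
subgroups of the free group of rank 2, it holds in every finitely generated free
group. -/
theorem shn_of_rank_two
    (h : ∀ U V : Subgroup (FreeGroup (Fin 2)), Group.FG U → Group.FG V → SHNIneq U V) :
    ∀ (n : ℕ) (U V : Subgroup (FreeGroup (Fin n))),
      Group.FG U → Group.FG V → SHNIneq U V := by
  intro n U V hU hV
  obtain ⟨φ, hφ⟩ := SHNEmbed.exists_embedding n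
  exact SHNIneq.of_map φ hφ U V
    (h (U.map φ) (V.map φ) (fg_map_of_injective φ hφ U hU) (fg_map_of_injective φ hφ V hV))
end

section
/- If φ: F → F' is an injective group homomorphism between free groups and the Strengthened Hanna Neumann inequality holds for the subgroups φ(U), φ(V) of F', and moreover every double coset of φ(V)\F'/φ(U) intersecting φ(F) comes from a double coset of V\F/U, then ∑_{x∈T} χ₀(U ∩ x⁻¹Vx) ≤ χ₀(U)χ₀(V) for U, V ≤ F. -/
open scoped Classical

lemma chi0_congr {G H : Type*} [Group G] [Group H] {K : Subgroup G} {L : Subgroup H}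
    (e : K ≃* L) : chi0 K = chi0 L := by
  unfold chi0
  by_cases h : Group.FG K
  · have h' : Group.FG L := @Group.fg_of_surjective _ _ _ _ h e.toMonoidHom e.surjective
    rw [dif_pos h, dif_pos h', @Group.rank_congr _ _ _ _ h h' e]
  · have h' : ¬ Group.FG L := fun h' =>
      h (@Group.fg_of_surjective _ _ _ _ h' e.symm.toMonoidHom e.symm.surjective)
    rw [dif_neg h, dif_neg h']

lemma map_conjSubgroup {G H : Type*} [Group G] [Group H] (φ : G →* H) (x : G)
    (V : Subgroup G) :
    (conjSubgroup x V).map φ = conjSubgroup (φ x) (V.map φ) := by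
  unfold conjSubgroup
  rw [Subgroup.map_map, Subgroup.map_map]
  congr 1
  ext v
  simp [MulAut.conj]

/-- If `φ : F → F'` is injective between free groups, the Strengthened Hanna Neumann
inequality holds for `φ(U), φ(V)` in `F'`, and every double coset of
`φ(V)\F'/φ(U)` meeting `φ(F)` comes from a double coset of `V\F/U`, then the
inequality holds for `U, V` in `F`. -/
theorem shn_pullback (α β : Type) (φ : FreeGroup α →* FreeGroup β)
    (hφ : Function.Injective φ)
    (U V : Subgroup (FreeGroup α)) (hU : Group.FG U) (hV : Group.FG V)
    (hSHN : SHNIneq (U.map φ) (V.map φ))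
    (hcosets : ∀ x y : FreeGroup α,
      DoubleCoset.mk (V.map φ) (U.map φ) (φ x) = DoubleCoset.mk (V.map φ) (U.map φ) (φ y) →
        DoubleCoset.mk V U x = DoubleCoset.mk V U y) :
    SHNIneq U V := by
  intro T hT
  have key : ∀ x : FreeGroup α,
      chi0 (U ⊓ conjSubgroup x V) = chi0 (U.map φ ⊓ conjSubgroup (φ x) (V.map φ)) := by
    intro x
    have hmap : (U ⊓ conjSubgroup x V).map φ = U.map φ ⊓ conjSubgroup (φ x) (V.map φ) := by
      rw [Subgroup.map_inf _ _ φ hφ, map_conjSubgroup]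
    calc chi0 (U ⊓ conjSubgroup x V)
        = chi0 ((U ⊓ conjSubgroup x V).map φ) :=
          chi0_congr (Subgroup.equivMapOfInjective _ φ hφ)
      _ = chi0 (U.map φ ⊓ conjSubgroup (φ x) (V.map φ)) := by rw [hmap]
  have hUchi : chi0 (U.map φ) = chi0 U := (chi0_congr (Subgroup.equivMapOfInjective U φ hφ)).symm
  have hVchi : chi0 (V.map φ) = chi0 V := (chi0_congr (Subgroup.equivMapOfInjective V φ hφ)).symm
  have hsum : ∑ x ∈ T, chi0 (U ⊓ conjSubgroup x V)
      = ∑ y ∈ T.image φ, chi0 (U.map φ ⊓ conjSubgroup y (V.map φ)) := by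
    rw [Finset.sum_image (fun a _ b _ h => hφ h)]
    exact Finset.sum_congr rfl fun x _ => key x
  rw [hsum, ← hUchi, ← hVchi]
  apply hSHN
  intro a ha b hb hab
  simp only [Finset.mem_image] at ha hb
  obtain ⟨x, hx, rfl⟩ := ha
  obtain ⟨y, hy, rfl⟩ := hb
  exact congrArg φ (hT x hx y hy (hcosets x y hab))
end
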